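/- The binary relation R on ℕ given by R(n, m) iff m = n + 1 or (n, m) = (0, 3) is rigid: the only map f : ℕ → ℕ satisfying R(a, b) → R(f(a), f(b)) for all a, b is the identity. -/
import Mathlib

/-- The relation on `ℕ` consisting of all pairs `(n, n+1)` together with the
extra pair `(0, 3)` is rigid: its only endomorphism is the identity. -/
theorem rigid_path_with_arc (f : ℕ → ℕ)
    (hf : ∀ a b : ℕ, (b = a + 1 ∨ (a = 0 ∧ b = 3)) →
      (f b = f a + 1 ∨ (f a = 0 ∧ f b = 3))) :
    ∀ n, f n = n := by
  have h0 : f 0 = 0 := by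
    by_contra h
    have key : ∀ n, f n = f 0 + n := by
      intro n; induction n with
      | zero => simp
      | succ k ih =>
        rcases hf k (k+1) (Or.inl rfl) with h1 | h2
        · omega
        · omega
    have h3 := key 3
    rcases hf 0 3 (Or.inr ⟨rfl, rfl⟩) with h1 | h2 <;> omega
  rcases hf 0 1 (Or.inl rfl) with h1 | h1
  · have key : ∀ n, 1 ≤ n → f n = n := by
      intro n hn
      induction n with
      | zero => omega
      | succ k ih =>
        rcases Nat.eq_or_lt_of_le hn with he | hl
        · have hk0 : k = 0 := by omega
          subst hk0
          show f 1 = 1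
          omega
        · have hk : 1 ≤ k := by omega
          have := ih hk
          rcases hf k (k+1) (Or.inl rfl) with h2 | h2 <;> omega
    intro n
    rcases Nat.eq_zero_or_pos n with rfl | hn
    · exact h0
    · exact key n hn
  · exfalso
    have h2 : f 2 = 4 := by rcases hf 1 2 (Or.inl rfl) with h | h <;> omega
    have h3 : f 3 = 5 := by rcases hf 2 3 (Or.inl rfl) with h | h <;> omega
    rcases hf 0 3 (Or.inr ⟨rfl, rfl⟩) with h | h <;> omega
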